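/- Let Y be a locally compact abelian group and f : Y → ℝ a continuous function which is a polynomial, i.e., Δ_h^{n+1} f(y) = 0 for some n and all y, h ∈ Y, where Δ_h f(y) = f(y+h) − f(y). Then f is constant on the subgroup b_Y of compact elements of Y. -/

import Mathlib

/-- The finite difference operator `Δ_h f (y) = f (y + h) - f y`. -/
def finDiff {Y : Type*} [AddCommGroup Y] (h : Y) (f : Y → ℝ) : Y → ℝ :=
  fun y => f (y + h) - f y

/-- Integer finite difference operator. -/
def intDiff (g : ℤ → ℝ) : ℤ → ℝ := fun m => g (m + 1) - g m

lemma intDiff_iterate_eq {Y : Type*} [AddCommGroup Y] (y : Y) :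
    ∀ (k : ℕ) (f : Y → ℝ),
      intDiff^[k] (fun m : ℤ => f (m • y)) = fun m : ℤ => (finDiff y)^[k] f (m • y) := by
  intro k
  induction k with
  | zero => intro f; rfl
  | succ k ih =>
    intro f
    rw [Function.iterate_succ_apply, Function.iterate_succ_apply]
    have h1 : intDiff (fun m : ℤ => f (m • y)) = fun m : ℤ => (finDiff y f) (m • y) := by
      funext m
      simp [intDiff, finDiff, add_zsmul, one_zsmul]
    rw [h1, ih (finDiff y f)]

lemma bounded_poly_const : ∀ (n : ℕ) (g : ℤ → ℝ) (C : ℝ),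
    (∀ m, |g m| ≤ C) → intDiff^[n + 1] g = 0 → ∀ m, g m = g 0 := by
  intro n
  induction n with
  | zero =>
    intro g C hC hD m
    have hstep : ∀ m : ℤ, g (m + 1) = g m := by
      intro m
      have := congrFun hD m
      simp [intDiff] at this
      linarith
    induction m using Int.induction_on with
    | zero => rfl
    | succ k ihk => rw [hstep k]; exact ihk
    | pred k ihk =>
      have h1 := hstep (-(k : ℤ) - 1)
      have h2 : (-(k : ℤ) - 1 + 1) = -(k : ℤ) := by ring
      rw [h2] at h1
      rw [← h1]; exact ihk
  | succ n ih =>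
    intro g C hC hD
    set g' := intDiff g with hg'
    have hD' : intDiff^[n + 1] g' = 0 := by
      rw [hg', ← Function.iterate_succ_apply]
      exact hD
    have hC' : ∀ m, |g' m| ≤ 2 * C := by
      intro m
      have h1 := hC (m + 1)
      have h2 := hC m
      have h3 : |g (m + 1) - g m| ≤ |g (m + 1)| + |g m| := abs_sub _ _
      simp only [hg', intDiff]
      linarith
    have hconst : ∀ m, g' m = g' 0 := ih g' (2 * C) hC' hD'
    set c := g' 0 with hc
    have hlin : ∀ m : ℤ, g m = g 0 + m * c := by
      intro m
      induction m using Int.induction_on with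
      | zero => simp
      | succ k ihk =>
        have h1 := hconst k
        simp only [intDiff, hg'] at h1
        push_cast
        push_cast at ihk
        linarith
      | pred k ihk =>
        have h1 := hconst (-(k : ℤ) - 1)
        have h2 : (-(k : ℤ) - 1 + 1) = -(k : ℤ) := by ring
        simp only [intDiff, hg', h2] at h1
        push_cast
        push_cast at ihk
        linarith
    have hc0 : c = 0 := by
      by_contra hne
      have habs : ∀ m : ℤ, |(m : ℝ)| * |c| ≤ 2 * C := by
        intro m
        have h1 := hC m
        have h2 := hC 0
        rw [hlin m] at h1
        have : |(m : ℝ) * c| ≤ |g 0 + m * c| + |g 0| := by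
          have := abs_sub (g 0 + (m : ℝ) * c) (g 0)
          simpa using this
        rw [abs_mul] at this
        linarith
      obtain ⟨N, hN⟩ := exists_nat_gt (2 * C / |c|)
      have hcpos : (0 : ℝ) < |c| := abs_pos.mpr hne
      have h1 := habs (N : ℤ)
      have h2 : 2 * C / |c| < (N : ℝ) := hN
      rw [div_lt_iff₀ hcpos] at h2
      simp only [Int.cast_natCast] at h1
      have h3 : |(N : ℝ)| = (N : ℝ) := abs_of_nonneg (Nat.cast_nonneg N)
      rw [h3] at h1
      linarith
    intro m
    rw [hlin m, hc0]
    ring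

/-- A continuous polynomial on a locally compact abelian group is
constant on the subgroup of compact elements. -/
theorem continuous_polynomial_const_on_compact_elements {Y : Type*} [AddCommGroup Y]
    [TopologicalSpace Y] [IsTopologicalAddGroup Y] [LocallyCompactSpace Y]
    (f : Y → ℝ) (hf : Continuous f)
    (hpoly : ∃ n : ℕ, ∀ y h : Y, (finDiff h)^[n + 1] f y = 0) :
    ∀ y : Y, IsCompact (closure (Set.range fun m : ℤ => m • y)) → f y = f 0 := by
  obtain ⟨n, hn⟩ := hpoly
  intro y hK
  have hmem : ∀ m : ℤ, (m • y) ∈ closure (Set.range fun m : ℤ => m • y) :=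
    fun m => subset_closure ⟨m, rfl⟩
  obtain ⟨C, hC⟩ := (hK.image hf).isBounded.subset_closedBall 0
  have hbd : ∀ m : ℤ, |f (m • y)| ≤ C := by
    intro m
    have hmem2 : f (m • y) ∈ Metric.closedBall (0 : ℝ) C := hC ⟨m • y, hmem m, rfl⟩
    simpa [Real.dist_eq] using hmem2
  have hDg : intDiff^[n + 1] (fun m : ℤ => f (m • y)) = 0 := by
    rw [intDiff_iterate_eq y (n + 1) f]
    funext m
    exact hn (m • y) y
  have := bounded_poly_const n (fun m : ℤ => f (m • y)) C hbd hDg 1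
  simpa using this
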